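/- Let p ∈ ℕ and let s ≥ 1 be a natural number. Then i ⊕ s = i + s for every i with 0 ≤ i ≤ p if and only if there exist a natural number u ≥ 1 and a non-negative integer v such that s = u·2^v and 2^v > p. -/

import Mathlib

lemma key_add_xor_and (a b : ℕ) : a + b = (a ^^^ b) + 2 * (a &&& b) := by
  induction a using Nat.binaryRec generalizing b with
  | zero => simp
  | bit c a ih =>
    induction b using Nat.binaryRec with
    | zero => simp
    | bit d b _ =>
      rw [Nat.xor_bit, Nat.land_bit]
      simp only [Nat.bit_val]
      have h := ih b
      cases c <;> cases d <;>
        simp only [bne_self_eq_false, Bool.bne_false, Bool.false_bne, Bool.bne_true,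
          Bool.true_bne, Bool.not_true, Bool.not_false, Bool.and_self, Bool.and_false,
          Bool.false_and, Bool.and_true, Bool.true_and, Bool.toNat_true, Bool.toNat_false] <;>
        omega

theorem stmt_12 (p s : ℕ) (hs : 1 ≤ s) :
    (∀ i ≤ p, i ^^^ s = i + s) ↔
    (∃ u v : ℕ, 1 ≤ u ∧ s = u * 2 ^ v ∧ p < 2 ^ v) := by
  constructor
  · intro H
    set v := Nat.size p with hv
    have hbit : ∀ j < v, s.testBit j = false := by
      intro j hj
      have hle : 2 ^ j ≤ p := by
        rcases Nat.lt_or_ge p (2 ^ j) with h | h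
        · exact absurd (Nat.size_le.2 h) (by omega)
        · exact h
      have h1 := H (2 ^ j) hle
      have h2 := key_add_xor_and (2 ^ j) s
      have h3 : 2 ^ j &&& s = 0 := by omega
      rw [Nat.two_pow_and] at h3
      have := Nat.pow_pos (n := j) (by norm_num : 0 < 2)
      rcases Bool.eq_false_or_eq_true (s.testBit j) with h | h
      · rw [h] at h3
        simp only [Bool.toNat_true, mul_one] at h3
        omega
      · exact h
    have hmod : s % 2 ^ v = 0 := by
      apply Nat.eq_of_testBit_eq
      intro j
      rw [Nat.testBit_mod_two_pow]
      simp only [Nat.zero_testBit, Bool.and_eq_false_iff]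
      by_cases hj : j < v
      · exact Or.inr (hbit j hj)
      · simp [hj]
    have hdvd : 2 ^ v ∣ s := Nat.dvd_of_mod_eq_zero hmod
    refine ⟨s / 2 ^ v, v, ?_, ?_, Nat.lt_size_self p⟩
    · rcases Nat.eq_zero_or_pos (s / 2 ^ v) with h | h
      · have := Nat.div_mul_cancel hdvd
        rw [h] at this; omega
      · exact h
    · exact (Nat.div_mul_cancel hdvd).symm
  · rintro ⟨u, v, hu, rfl, hp⟩
    intro i hi
    have hand : i &&& u * 2 ^ v = 0 := by
      apply Nat.eq_of_testBit_eq
      intro j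
      rw [Nat.testBit_and, Nat.zero_testBit]
      by_cases hj : j < v
      · have : (u * 2 ^ v).testBit j = false := by
          rw [← Nat.shiftLeft_eq, Nat.testBit_shiftLeft]
          simp [Nat.not_le.mpr hj]
        simp [this]
      · have : i.testBit j = false := by
          apply Nat.testBit_lt_two_pow
          calc i ≤ p := hi
            _ < 2 ^ v := hp
            _ ≤ 2 ^ j := Nat.pow_le_pow_right (by norm_num) (by omega)
        simp [this]
    have := key_add_xor_and i (u * 2 ^ v)
    omega
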